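/- The set ℬⁿ of all non-degenerated compact convex subsets of ℝⁿ whose circumball equals the closed unit ball is compact in the hyperspace of compact convex sets equipped with the Hausdorff metric. -/

import Mathlib

open Metric Set

noncomputable section

/-- `E n` is the Euclidean space `ℝⁿ`. -/
abbrev E (n : ℕ) := EuclideanSpace ℝ (Fin n)

/-- `IsCircumball A c r` : the closed ball of center `c` and radius `r` is the smallest
enclosing ball of `A` (ball of minimal radius containing `A`). -/
def IsCircumball {n : ℕ} (A : Set (E n)) (c : E n) (r : ℝ) : Prop :=
  A ⊆ closedBall c r ∧ ∀ c' r', A ⊆ closedBall c' r' → r ≤ r'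

/-- A similarity of `ℝⁿ`: a map of the form `x ↦ u + λ σ x` with `λ > 0` and `σ` orthogonal. -/
def IsSimilarity {n : ℕ} (g : E n → E n) : Prop :=
  ∃ (u : E n) (l : ℝ) (σ : E n ≃ₗᵢ[ℝ] E n), 0 < l ∧ ∀ x, g x = u + l • σ x

open TopologicalSpace in
theorem aux_closed {n : ℕ} :
    IsClosed {K : NonemptyCompacts (E n) |
      Convex ℝ (K : Set (E n)) ∧ IsCircumball (K : Set (E n)) 0 1} := by
  apply IsSeqClosed.isClosed
  intro Ks K hKs hlim
  have hfin : ∀ i, EMetric.hausdorffEdist ((Ks i : Set (E n))) (K : Set (E n)) ≠ ⊤ :=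
    fun i => hausdorffEdist_ne_top_of_nonempty_of_bounded (Ks i).nonempty K.nonempty
      (Ks i).isCompact.isBounded K.isCompact.isBounded
  have hd : ∀ ε > (0:ℝ), ∃ i, hausdorffDist ((Ks i : Set (E n))) (K : Set (E n)) < ε := by
    intro ε hε
    obtain ⟨N, hN⟩ := Metric.tendsto_atTop.mp hlim ε hε
    exact ⟨N, by simpa [NonemptyCompacts.dist_eq] using hN N le_rfl⟩
  -- approximation in both directions
  have fwd : ∀ ε > (0:ℝ), ∀ i, hausdorffDist ((Ks i : Set (E n))) (K : Set (E n)) < ε →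
      ∀ x ∈ (K : Set (E n)), ∃ y ∈ (Ks i : Set (E n)), dist x y < ε := by
    intro ε hε i hi x hx
    have h1 : infDist x ((Ks i : Set (E n))) ≤ hausdorffDist (K : Set (E n)) ((Ks i : Set (E n))) :=
      infDist_le_hausdorffDist_of_mem hx (by rw [EMetric.hausdorffEdist_comm]; exact hfin i)
    rw [hausdorffDist_comm] at h1
    exact (infDist_lt_iff (Ks i).nonempty).mp (lt_of_le_of_lt h1 hi)
  have bwd : ∀ ε > (0:ℝ), ∀ i, hausdorffDist ((Ks i : Set (E n))) (K : Set (E n)) < ε →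
      ∀ y ∈ (Ks i : Set (E n)), ∃ x ∈ (K : Set (E n)), dist y x < ε := by
    intro ε hε i hi y hy
    have h1 : infDist y (K : Set (E n)) ≤ hausdorffDist ((Ks i : Set (E n))) (K : Set (E n)) :=
      infDist_le_hausdorffDist_of_mem hy (hfin i)
    exact (infDist_lt_iff K.nonempty).mp (lt_of_le_of_lt h1 hi)
  refine ⟨?_, ?_, ?_⟩
  · -- convexity
    intro x hx y hy a b ha hb hab
    have hcl : (K : Set (E n)) = closure (K : Set (E n)) := K.isCompact.isClosed.closure_eq.symm
    rw [hcl] at hx hy ⊢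
    rw [Metric.mem_closure_iff] at hx hy ⊢
    intro ε hε
    have hε2 : 0 < ε / 4 := by linarith
    obtain ⟨i, hi⟩ := hd (ε/4) hε2
    obtain ⟨x0, hx0, hx0d⟩ := hx (ε/4) hε2
    obtain ⟨y0, hy0, hy0d⟩ := hy (ε/4) hε2
    obtain ⟨x', hx', hx'd⟩ := fwd (ε/4) hε2 i hi x0 hx0
    obtain ⟨y', hy', hy'd⟩ := fwd (ε/4) hε2 i hi y0 hy0
    have hz' : a • x' + b • y' ∈ (Ks i : Set (E n)) := (hKs i).1 hx' hy' ha hb hab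
    obtain ⟨z, hz, hzd⟩ := bwd (ε/4) hε2 i hi _ hz'
    refine ⟨z, hz, ?_⟩
    have key : dist (a • x + b • y) (a • x' + b • y') ≤ a * dist x x' + b * dist y y' := by
      calc dist (a • x + b • y) (a • x' + b • y')
          ≤ dist (a • x) (a • x') + dist (b • y) (b • y') := dist_add_add_le _ _ _ _
        _ = a * dist x x' + b * dist y y' := by
            rw [dist_smul₀, dist_smul₀, Real.norm_of_nonneg ha, Real.norm_of_nonneg hb]
    have hxx' : dist x x' < ε/2 := by
      calc dist x x' ≤ dist x x0 + dist x0 x' := dist_triangle _ _ _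
        _ < ε/4 + ε/4 := add_lt_add hx0d hx'd
        _ = ε/2 := by ring
    have hyy' : dist y y' < ε/2 := by
      calc dist y y' ≤ dist y y0 + dist y0 y' := dist_triangle _ _ _
        _ < ε/4 + ε/4 := add_lt_add hy0d hy'd
        _ = ε/2 := by ring
    have key2 : a * dist x x' + b * dist y y' ≤ ε/2 := by
      have h1 : a * dist x x' ≤ a * (ε/2) := mul_le_mul_of_nonneg_left hxx'.le ha
      have h2 : b * dist y y' ≤ b * (ε/2) := mul_le_mul_of_nonneg_left hyy'.le hb
      have h3 : a * (ε/2) + b * (ε/2) = ε/2 := by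
        rw [← add_mul, hab, one_mul]
      linarith
    have hzd' : dist (a • x' + b • y') z < ε/2 := by linarith
    calc dist (a • x + b • y) z
        ≤ dist (a • x + b • y) (a • x' + b • y') + dist (a • x' + b • y') z :=
          dist_triangle _ _ _
      _ < ε/2 + ε/2 := add_lt_add_of_le_of_lt (key.trans key2) hzd'
      _ = ε := by ring
  · -- subset of unit ball
    intro x hx
    rw [mem_closedBall]
    refine le_of_forall_pos_le_add fun ε hε => ?_
    obtain ⟨i, hi⟩ := hd ε hε
    obtain ⟨y, hy, hyd⟩ := fwd ε hε i hi x hx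
    have : y ∈ closedBall (0 : E n) 1 := (hKs i).2.1 hy
    calc dist x 0 ≤ dist x y + dist y 0 := dist_triangle _ _ _
      _ ≤ ε + 1 := add_le_add hyd.le (mem_closedBall.mp this)
      _ = 1 + ε := by ring
  · -- minimality
    intro c' r' hsub
    refine le_of_forall_pos_le_add fun ε hε => ?_
    obtain ⟨i, hi⟩ := hd ε hε
    have : (Ks i : Set (E n)) ⊆ closedBall c' (r' + ε) := by
      intro y hy
      obtain ⟨x, hx, hxd⟩ := bwd ε hε i hi y hy
      rw [mem_closedBall]
      calc dist y c' ≤ dist y x + dist x c' := dist_triangle _ _ _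
        _ ≤ ε + r' := add_le_add hxd.le (mem_closedBall.mp (hsub hx))
        _ = r' + ε := by ring
    exact (hKs i).2.2 c' (r' + ε) this


open TopologicalSpace

/-- ℬⁿ, as a subset of the hyperspace of nonempty compact subsets of ℝⁿ with the
Hausdorff metric, is compact. -/
theorem stmt2 {n : ℕ} (hn : 2 ≤ n) :
    IsCompact {K : TopologicalSpace.NonemptyCompacts (E n) |
      Convex ℝ (K : Set (E n)) ∧ (K : Set (E n)).Nontrivial ∧
        IsCircumball (K : Set (E n)) 0 1} := by
  classical
  have hset : {K : NonemptyCompacts (E n) |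
      Convex ℝ (K : Set (E n)) ∧ (K : Set (E n)).Nontrivial ∧
        IsCircumball (K : Set (E n)) 0 1} =
      {K : NonemptyCompacts (E n) |
        Convex ℝ (K : Set (E n)) ∧ IsCircumball (K : Set (E n)) 0 1} := by
    ext K
    simp only [mem_setOf_eq, and_assoc]
    refine ⟨fun h => ⟨h.1, h.2.2⟩, fun h => ⟨h.1, ?_, h.2⟩⟩
    by_contra hnt
    push_neg at hnt
    obtain ⟨a, ha⟩ := K.nonempty
    have hsub : (K : Set (E n)) ⊆ closedBall a 0 := by
      intro x hx
      have : x = a := hnt hx ha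
      simp [this]
    linarith [h.2.2 a 0 hsub]
  rw [hset]
  set B : Set (E n) := closedBall 0 1 with hB
  have hBc : IsCompact B := isCompact_closedBall 0 1
  haveI : CompactSpace B := isCompact_iff_compactSpace.mp hBc
  let ι : NonemptyCompacts B → NonemptyCompacts (E n) := fun K =>
    ⟨⟨Subtype.val '' (K : Set B), K.isCompact.image continuous_subtype_val⟩,
      K.nonempty.image _⟩
  have hiso : Isometry ι := by
    apply Isometry.of_dist_eq
    intro K L
    have : dist (ι K) (ι L) = hausdorffDist (Subtype.val '' (K : Set B))
        (Subtype.val '' (L : Set B)) := NonemptyCompacts.dist_eq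
    rw [this, hausdorffDist_image isometry_subtype_coe, ← NonemptyCompacts.dist_eq]
  have hrange : IsCompact (Set.range ι) := isCompact_range hiso.continuous
  apply hrange.of_isClosed_subset aux_closed
  intro K hK
  have hKB : (K : Set (E n)) ⊆ B := hK.2.1
  refine ⟨⟨⟨Subtype.val ⁻¹' (K : Set (E n)),
    (K.isCompact.isClosed.preimage continuous_subtype_val).isCompact⟩, ?_⟩, ?_⟩
  · obtain ⟨x, hx⟩ := K.nonempty
    exact ⟨⟨x, hKB hx⟩, hx⟩
  · apply NonemptyCompacts.ext
    simp only [ι, NonemptyCompacts.coe_mk, TopologicalSpace.Compacts.coe_mk]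
    rw [Subtype.image_preimage_coe]
    exact inter_eq_right.mpr hKB
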